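/- Let T = (k^×)^n and let w ∈ S_n act on T by permuting coordinates. Then every t ∈ T can be written t = δ_w(t₁)·t₂ where δ_w(t₁) := w^{-1}(t₁)·t₁^{-1} and t₂ ∈ T satisfies w(t₂) = t₂. -/

import Mathlib

noncomputable section

open Finset Function
open scoped Classical

namespace Stmt5Aux

variable {k : Type*} [Field k] [IsAlgClosed k] {n : ℕ}

/-- choose an `m`-th root in `kˣ`. -/
noncomputable def rootU (x : kˣ) (m : ℕ) : kˣ :=
  if h : ∃ y : kˣ, y ^ m = x then h.choose else 1

lemma rootU_pow (x : kˣ) {m : ℕ} (hm : 0 < m) : (rootU x m) ^ m = x := by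
  have h : ∃ y : kˣ, y ^ m = x := by
    obtain ⟨y, hy⟩ := IsAlgClosed.exists_pow_nat_eq (x : k) hm
    have hy0 : y ≠ 0 := fun h0 => x.ne_zero (by rw [← hy, h0, zero_pow hm.ne'])
    exact ⟨Units.mk0 y hy0, Units.ext (by simp [hy])⟩
  rw [rootU, dif_pos h]
  exact h.choose_spec

variable (w : Equiv.Perm (Fin n)) (t : Fin n → kˣ)

def per (i : Fin n) : ℕ := Function.minimalPeriod ⇑w i

lemma isPer (i : Fin n) : Function.IsPeriodicPt ⇑w (orderOf w) i := by
  have h : w ^ orderOf w = 1 := pow_orderOf_eq_one w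
  show (⇑w)^[orderOf w] i = i
  rw [← Equiv.Perm.coe_pow, h]
  rfl

lemma mem_pp (i : Fin n) : i ∈ Function.periodicPts ⇑w :=
  Function.mk_mem_periodicPts (orderOf_pos w) (isPer w i)

lemma per_pos (i : Fin n) : 0 < per w i :=
  Function.minimalPeriod_pos_of_mem_periodicPts (mem_pp w i)

lemma per_apply (i : Fin n) : per w (w i) = per w i :=
  Function.minimalPeriod_apply (mem_pp w i)

lemma pow_per (i : Fin n) : (w ^ per w i) i = i := by
  have h := Function.isPeriodicPt_minimalPeriod ⇑w i
  simpa [per, Equiv.Perm.coe_pow] using h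

def Pp (i : Fin n) : kˣ := ∏ j ∈ Finset.range (per w i), t ((w ^ j) i)

lemma Pp_apply (i : Fin n) : Pp w t (w i) = Pp w t i := by
  rw [Pp, Pp, per_apply]
  set m := per w i with hm
  have h1 : ∀ j, t ((w ^ j) (w i)) = t ((w ^ (j + 1)) i) := fun j => by
    rw [pow_succ, Equiv.Perm.mul_apply]
  have hs : ∏ j ∈ range m, t ((w ^ j) (w i)) = ∏ j ∈ range m, t ((w ^ (j + 1)) i) :=
    Finset.prod_congr rfl fun j _ => h1 j
  rw [hs]
  have h2 := Finset.prod_range_succ' (fun j => t ((w ^ j) i)) m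
  have h3 := Finset.prod_range_succ (fun j => t ((w ^ j) i)) m
  have hmi : (w ^ m) i = i := pow_per w i
  rw [h3, hmi, pow_zero] at h2
  exact mul_right_cancel h2.symm

def t2 (i : Fin n) : kˣ := rootU (Pp w t i) (per w i)

lemma t2_apply (i : Fin n) : t2 w t (w i) = t2 w t i := by
  rw [t2, t2, per_apply, Pp_apply]

lemma t2_pow_apply (j : ℕ) (i : Fin n) : t2 w t ((w ^ j) i) = t2 w t i := by
  induction j with
  | zero => simp
  | succ j ih => rw [pow_succ', Equiv.Perm.mul_apply] at *; rw [t2_apply, ih]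

lemma t2_pow (i : Fin n) : (t2 w t i) ^ (per w i) = Pp w t i :=
  rootU_pow _ (per_pos w i)

def sf (i : Fin n) : kˣ := t i * (t2 w t i)⁻¹

lemma sf_prod (i : Fin n) : ∏ j ∈ range (per w i), sf w t ((w ^ j) i) = 1 := by
  unfold sf
  rw [Finset.prod_mul_distrib]
  have h : ∀ j ∈ range (per w i), (t2 w t ((w ^ j) i))⁻¹ = (t2 w t i)⁻¹ := fun j _ => by
    rw [t2_pow_apply]
  rw [Finset.prod_congr rfl h, Finset.prod_const, Finset.card_range, inv_pow, t2_pow, ← Pp]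
  simp

def repF (i : Fin n) : Fin n :=
  (Finset.univ.filter fun j => w.SameCycle i j).min'
    ⟨i, by simp [Equiv.Perm.SameCycle.refl]⟩

lemma same_repF (i : Fin n) : w.SameCycle i (repF w i) := by
  have h := Finset.min'_mem (Finset.univ.filter fun j => w.SameCycle i j)
    ⟨i, by simp [Equiv.Perm.SameCycle.refl]⟩
  exact (Finset.mem_filter.mp h).2

lemma repF_apply (i : Fin n) : repF w (w i) = repF w i := by
  have hset : (Finset.univ.filter fun j => w.SameCycle (w i) j)
      = (Finset.univ.filter fun j => w.SameCycle i j) := by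
    ext j
    simp [Equiv.Perm.sameCycle_apply_left]
  simp only [repF, hset]

lemma exists_pow_rep (i : Fin n) : ∃ j : ℕ, (w ^ j) (repF w i) = i := by
  obtain ⟨j, _, hj⟩ := (same_repF w i).symm.exists_pow_eq'
  exact ⟨j, hj⟩

def aF (i : Fin n) : ℕ := Nat.find (exists_pow_rep w i)

lemma aF_spec (i : Fin n) : (w ^ aF w i) (repF w i) = i := by
  unfold aF
  exact Nat.find_spec (exists_pow_rep w i)

lemma aF_lt (i : Fin n) : aF w i < per w (repF w i) := by
  set r := repF w i with hr
  set m := per w r with hm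
  have hmpos : 0 < m := per_pos w r
  have hmod : (w ^ (aF w i % m)) r = i := by
    have h := Function.iterate_mod_minimalPeriod_eq (f := ⇑w) (x := r) (n := aF w i)
    have h1 : (w ^ (aF w i % m)) r = (⇑w)^[aF w i % m] r := by rw [Equiv.Perm.coe_pow]
    have h2 : (w ^ aF w i) r = (⇑w)^[aF w i] r := by rw [Equiv.Perm.coe_pow]
    rw [h1, hm, per, h, ← h2, aF_spec]
  have hle : aF w i ≤ aF w i % m := Nat.find_min' _ hmod
  exact lt_of_le_of_lt hle (Nat.mod_lt _ hmpos)

def t1 (i : Fin n) : kˣ := ∏ l ∈ range (aF w i), sf w t ((w ^ l) (repF w i))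

lemma t1_apply (i : Fin n) : t1 w t (w i) = sf w t i * t1 w t i := by
  set r := repF w i with hr
  have hrw : repF w (w i) = r := repF_apply w i
  set a := aF w i with ha'
  have ha : (w ^ a) r = i := aF_spec w i
  have haltm : a < per w r := aF_lt w i
  have hsum : sf w t i * t1 w t i = ∏ l ∈ range (a + 1), sf w t ((w ^ l) r) := by
    rw [Finset.prod_range_succ, t1, ha, ← hr, ← ha', mul_comm]
  by_cases hcase : a + 1 = per w r
  · have hwi : w i = r := by
      rw [← ha, ← Equiv.Perm.mul_apply, ← pow_succ', hcase, pow_per]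
    have haw : aF w (w i) = 0 := by
      rw [aF, Nat.find_eq_zero]
      rw [hrw, hwi]
      simp
    rw [t1, haw, Finset.range_zero, Finset.prod_empty, hsum, hcase, sf_prod]
  · have hlt : a + 1 < per w r := lt_of_le_of_ne (Nat.succ_le_of_lt haltm) hcase
    have haw : aF w (w i) = a + 1 := by
      rw [aF, Nat.find_eq_iff]
      refine ⟨?_, ?_⟩
      · rw [hrw, pow_succ', Equiv.Perm.mul_apply, ha]
      · intro j hj hP
        rw [hrw] at hP
        have hj' : j ≤ a := Nat.lt_succ_iff.mp hj
        have heq : (w ^ (a + 1 - j)) r = r := by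
          apply (w ^ j).injective
          rw [← Equiv.Perm.mul_apply, ← pow_add, Nat.add_sub_cancel' (by omega : j ≤ a + 1)]
          rw [hP, pow_succ', Equiv.Perm.mul_apply, ha]
        have hip : Function.IsPeriodicPt ⇑w (a + 1 - j) r := by
          show (⇑w)^[a + 1 - j] r = r
          rw [← Equiv.Perm.coe_pow]
          exact heq
        have := Function.IsPeriodicPt.minimalPeriod_le (by omega : 0 < a + 1 - j) hip
        have : per w r ≤ a + 1 - j := this
        omega
    rw [t1, haw, hrw, hsum]

end Stmt5Aux

/-- for the torus `T = (k^×)^n` with `S_n` acting by permuting coordinates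
(`(w·t)_i = t_{w⁻¹(i)}`), every `t ∈ T` can be written `t = δ_w(t₁)·t₂` with
`δ_w(t₁) = w⁻¹(t₁)·t₁⁻¹` (so `δ_w(t₁)_i = t₁(w(i))·t₁(i)⁻¹`) and `w(t₂) = t₂`. -/
theorem stmt5 {k : Type*} [Field k] [IsAlgClosed k] [CharZero k] {n : ℕ}
    (w : Equiv.Perm (Fin n)) (t : Fin n → kˣ) :
    ∃ t₁ t₂ : Fin n → kˣ,
      (∀ i, t₂ (w⁻¹ i) = t₂ i) ∧
      (∀ i, t i = t₁ (w i) * (t₁ i)⁻¹ * t₂ i) := by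
  refine ⟨Stmt5Aux.t1 w t, Stmt5Aux.t2 w t, fun i => ?_, fun i => ?_⟩
  · have h := Stmt5Aux.t2_apply w t (w⁻¹ i)
    rw [← Equiv.Perm.mul_apply, mul_inv_cancel, Equiv.Perm.one_apply] at h
    exact h.symm
  · rw [Stmt5Aux.t1_apply, Stmt5Aux.sf]
    group

end
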